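/- Change of basis between lines (Lemma 2.2(a)): if ℓ = {i, j, i*j} and ℓ' = {i, k, i*k} are two distinct Fano lines through i, then E_i^{ℓ,k} = (1/2)(E_i^{ℓ',j} + F_i^{ℓ'}) and F_i^{ℓ} = (1/2)(3·E_i^{ℓ',j} − F_i^{ℓ'}); equivalently, the column vector (E_i^{ℓ,k}, F_i^ℓ) equals P·(E_i^{ℓ',j}, F_i^{ℓ'}) with P = (1/2)[[1,1],[3,−1]]. -/
import Mathlib


noncomputable section

/-- Offset function for the octonion multiplication table: for distinct indices
`i, j` (in `ZMod 7`) with `d = j - i`, `eᵢ eⱼ = ± e_{i + octOff d}`.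
It encodes the rules `eᵢe_{i+1} = e_{i+3}`, `e_{i+1}e_{i+3} = eᵢ`,
`e_{i+3}eᵢ = e_{i+1}` (indices modulo 7). -/
def octOff : ZMod 7 → ZMod 7 := fun d =>
  if d = 1 then 3 else if d = 2 then 6 else if d = 3 then 1
  else if d = 4 then 5 else if d = 5 then 4 else if d = 6 then 2 else 0

/-- Sign in `eᵢ eⱼ = octSgn (j - i) • e_{i*j}` for distinct `i, j`. -/
def octSgn : ZMod 7 → ℝ := fun d => if d = 1 ∨ d = 2 ∨ d = 4 then 1 else -1

/-- The real octonion division algebra: a scalar part and seven imaginary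
coordinates (indexed by `ZMod 7`; index `i` stands for the unit `eᵢ`,
with `e₀ = e₇`). -/
def Oct : Type := ℝ × (ZMod 7 → ℝ)

instance : AddCommGroup Oct := inferInstanceAs (AddCommGroup (ℝ × (ZMod 7 → ℝ)))
instance : Module ℝ Oct := inferInstanceAs (Module ℝ (ℝ × (ZMod 7 → ℝ)))

/-- View an octonion as a pair. -/
def oc (x : Oct) : ℝ × (ZMod 7 → ℝ) := x
/-- Build an octonion from a pair. -/
def om (p : ℝ × (ZMod 7 → ℝ)) : Oct := p

/-- The octonion multiplication: `e₀ = 1` is the unit, `eᵢ² = -1` and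
`eᵢe_{i+1} = e_{i+3} = -e_{i+1}eᵢ` for the imaginary units (indices mod 7). -/
instance : Mul Oct :=
  ⟨fun x y => om
    ((oc x).1 * (oc y).1 - ∑ i : ZMod 7, (oc x).2 i * (oc y).2 i,
     fun k => (oc x).1 * (oc y).2 k + (oc y).1 * (oc x).2 k +
       ∑ i : ZMod 7, ∑ j : ZMod 7,
         (if i ≠ j ∧ k = i + octOff (j - i) then octSgn (j - i) else 0)
           * (oc x).2 i * (oc y).2 j)⟩

instance : One Oct := ⟨om (1, 0)⟩

/-- The imaginary basis units `eᵢ`, `i ∈ ZMod 7` (`e₀ = e₇`). -/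
def e (i : ZMod 7) : Oct := om (0, Pi.single i 1)

/-- For distinct `i, j`, `idx i j = i*j` is the index with `gᵢ + gⱼ = g_{i*j}`,
i.e. `eᵢeⱼ = ± e_{idx i j}`. -/
def idx (i j : ZMod 7) : ZMod 7 := i + octOff (j - i)

/-- A linear endomorphism of the octonions is a derivation. -/
def IsOctDer (d : Oct →ₗ[ℝ] Oct) : Prop := ∀ x y : Oct, d (x * y) = d x * y + x * d y

/-- The quaternion subalgebra `Q_ℓ = ⟨1, eᵢ, eⱼ, e_{i*j}⟩` attached to the
Fano line `ℓ = {i, j, i*j}`. -/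
def Qline (i j : ZMod 7) : Submodule ℝ Oct :=
  Submodule.span ℝ ({1, e i, e j, e (idx i j)} : Set Oct)

/-- `isE i k Q E` says that `E = E_i^{ℓ,k}` : `E(q) = 0` and
`E(q·e_k) = (1/2)(eᵢq)e_k` for all `q ∈ Q = Q_ℓ`. -/
def isE (i k : ZMod 7) (Q : Submodule ℝ Oct) (E : Oct →ₗ[ℝ] Oct) : Prop :=
  ∀ q ∈ Q, E q = 0 ∧ E (q * e k) = (1/2 : ℝ) • ((e i * q) * e k)

/-- `isF i k Q F` says that `F = F_i^{ℓ,k}` : `F(q) = (1/2)[eᵢ, q]` and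
`F(q·e_k) = −(1/2)(q·eᵢ)e_k` for all `q ∈ Q = Q_ℓ`. -/
def isF (i k : ZMod 7) (Q : Submodule ℝ Oct) (F : Oct →ₗ[ℝ] Oct) : Prop :=
  ∀ q ∈ Q, F q = (1/2 : ℝ) • (e i * q - q * e i) ∧
    F (q * e k) = -((1/2 : ℝ) • ((q * e i) * e k))

end

noncomputable section

lemma oct_one_def : (1 : Oct) = ((1 : ℝ), (0 : ZMod 7 → ℝ)) := rfl

def octFst : Oct →ₗ[ℝ] ℝ :=
  { toFun := fun x => (oc x).1, map_add' := fun _ _ => rfl, map_smul' := fun _ _ => rfl }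

def octCoord (b : ZMod 7) : Oct →ₗ[ℝ] ℝ :=
  { toFun := fun x => (oc x).2 b, map_add' := fun _ _ => rfl, map_smul' := fun _ _ => rfl }

lemma oct_ext' {x y : Oct} (h1 : octFst x = octFst y)
    (h2 : ∀ b, octCoord b x = octCoord b y) : x = y :=
  Prod.ext h1 (funext h2)

lemma oct_decomp (x : Oct) :
    x = (oc x).1 • (1 : Oct) + ∑ a : ZMod 7, (oc x).2 a • e a := by
  refine oct_ext' ?_ fun b => ?_
  · rw [map_add, map_smul, map_sum]
    simp only [map_smul, smul_eq_mul]
    simp [octFst, oct_one_def, e, om, oc]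
  · rw [map_add, map_smul, map_sum]
    simp only [map_smul, smul_eq_mul]
    simp [octCoord, oct_one_def, e, om, oc, Pi.single_apply, Finset.sum_ite_eq']

lemma oct_lm_ext (M N : Oct →ₗ[ℝ] Oct) (h1 : M 1 = N 1)
    (h : ∀ a : ZMod 7, M (e a) = N (e a)) : M = N := by
  ext x
  rw [oct_decomp x, map_add, map_add, map_smul, map_smul, map_sum, map_sum, h1]
  congr 1
  exact Finset.sum_congr rfl fun a _ => by rw [map_smul, map_smul, h a]

lemma oct_one_mul (x : Oct) : (1 : Oct) * x = x := by
  show om _ = x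
  unfold om oc
  refine Prod.ext ?_ (funext fun b => ?_) <;> simp [oct_one_def]

lemma oct_mul_one (x : Oct) : x * (1 : Oct) = x := by
  show om _ = x
  unfold om oc
  refine Prod.ext ?_ (funext fun b => ?_) <;> simp [oct_one_def]

lemma oct_smul_def (s : ℝ) (p : ℝ × (ZMod 7 → ℝ)) :
    s • om p = om (s * p.1, fun b => s * p.2 b) := rfl

lemma e_mul_e {a b : ZMod 7} (h : a ≠ b) :
    e a * e b = octSgn (b - a) • e (idx a b) := by
  show om _ = _
  rw [e, e, e, idx, oct_smul_def]
  simp only [om, oc]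
  refine Prod.ext ?_ (funext fun c => ?_)
  · simp [Pi.single_apply, Ne.symm h]
  · show _ = octSgn (b-a) * _
    simp [Pi.single_apply, mul_ite, ite_and, Finset.sum_ite_eq, h]

lemma e_mul_self (a : ZMod 7) : e a * e a = (-1 : ℝ) • (1 : Oct) := by
  show om _ = _
  rw [oct_one_def]
  show om _ = (-1 : ℝ) • om _
  rw [oct_smul_def]
  simp only [om, oc, e]
  refine Prod.ext ?_ (funext fun c => ?_)
  · simp [Pi.single_apply]
  · simp [Pi.single_apply]

lemma oct_smul_mul (s : ℝ) (x y : Oct) : (s • x) * y = s • (x * y) := by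
  show om _ = _
  rw [show s • x = om (s * (oc x).1, fun b => s * (oc x).2 b) from rfl,
    show x * y = om _ from rfl, oct_smul_def]
  simp only [om, oc]
  refine Prod.ext ?_ (funext fun c => ?_)
  · rw [mul_sub, Finset.mul_sum]
    refine congrArg₂ (· - ·) (by ring) (Finset.sum_congr rfl fun i _ => by ring)
  · dsimp only
    rw [mul_add, mul_add, Finset.mul_sum]
    refine congrArg₂ (· + ·) (congrArg₂ (· + ·) (by ring) (by ring))
      (Finset.sum_congr rfl fun i _ => ?_)
    rw [Finset.mul_sum]
    exact Finset.sum_congr rfl fun j _ => by ring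

lemma oct_mul_smul (s : ℝ) (x y : Oct) : x * (s • y) = s • (x * y) := by
  show om _ = _
  rw [show s • y = om (s * (oc y).1, fun b => s * (oc y).2 b) from rfl,
    show x * y = om _ from rfl, oct_smul_def]
  simp only [om, oc]
  refine Prod.ext ?_ (funext fun c => ?_)
  · rw [mul_sub, Finset.mul_sum]
    refine congrArg₂ (· - ·) (by ring) (Finset.sum_congr rfl fun i _ => by ring)
  · dsimp only
    rw [mul_add, mul_add, Finset.mul_sum]
    refine congrArg₂ (· + ·) (congrArg₂ (· + ·) (by ring) (by ring))
      (Finset.sum_congr rfl fun i _ => ?_)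
    rw [Finset.mul_sum]
    exact Finset.sum_congr rfl fun j _ => by ring

def octSgnZ : ZMod 7 → ℤ := fun d => if d = 1 ∨ d = 2 ∨ d = 4 then 1 else -1

lemma octSgn_cast (d : ZMod 7) : octSgn d = (octSgnZ d : ℝ) := by
  unfold octSgn octSgnZ; split <;> simp

lemma octSgn_sq (d : ZMod 7) : octSgn d * octSgn d = 1 := by
  unfold octSgn; split <;> norm_num

lemma eval_from_smul {s : ℝ} (hs : s * s = 1) {M : Oct →ₗ[ℝ] Oct} {v w : Oct}
    (h : M (s • v) = w) : M v = s • w := by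
  rw [map_smul] at h
  rw [← h, smul_smul, hs, one_smul]

lemma mem_Q1 (a b : ZMod 7) : (1 : Oct) ∈ Qline a b :=
  Submodule.subset_span (by simp)
lemma mem_Qa (a b : ZMod 7) : e a ∈ Qline a b :=
  Submodule.subset_span (by simp)
lemma mem_Qb (a b : ZMod 7) : e b ∈ Qline a b :=
  Submodule.subset_span (by simp)
lemma mem_Qab (a b : ZMod 7) : e (idx a b) ∈ Qline a b :=
  Submodule.subset_span (by simp)

end

noncomputable section

lemma idx_ne_left : ∀ a b : ZMod 7, a ≠ b → idx a b ≠ a := by decide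
lemma idx_ne_right : ∀ a b : ZMod 7, a ≠ b → idx a b ≠ b := by decide
lemma idx_symm : ∀ a b : ZMod 7, a ≠ b → idx b a = idx a b := by decide
lemma idx_inv : ∀ a b : ZMod 7, a ≠ b → idx a (idx a b) = b := by decide
lemma idx_assoc : ∀ i j k : ZMod 7, i ≠ j → k ≠ i → k ≠ j → k ≠ idx i j →
    idx (idx i k) j = idx (idx i j) k := by decide
lemma idx_ik_ne_j : ∀ i j k : ZMod 7, i ≠ j → k ≠ i → k ≠ j → k ≠ idx i j →
    idx i k ≠ j := by decide
lemma oct_cover : ∀ i j k a : ZMod 7, i ≠ j → k ≠ i → k ≠ j → k ≠ idx i j →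
    (a = i ∨ a = j ∨ a = idx i j ∨ a = k ∨ a = idx i k ∨ a = idx j k ∨
      a = idx (idx i j) k) := by decide

lemma sgnZ_neg : ∀ a b : ZMod 7, a ≠ b → octSgnZ (a - b) = - octSgnZ (b - a) := by decide
lemma sgnZ_idx : ∀ a b : ZMod 7, a ≠ b →
    octSgnZ (idx a b - a) = - octSgnZ (b - a) := by decide
lemma sgnZ_rel : ∀ i j k : ZMod 7, i ≠ j → k ≠ i → k ≠ j → k ≠ idx i j →
    octSgnZ (j - i) * octSgnZ (k - idx i j)
      = -(octSgnZ (k - i) * octSgnZ (j - idx i k)) := by decide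

lemma sgn_neg {a b : ZMod 7} (h : a ≠ b) : octSgn (a - b) = - octSgn (b - a) := by
  rw [octSgn_cast, octSgn_cast, sgnZ_neg a b h, Int.cast_neg]

lemma sgn_idx {a b : ZMod 7} (h : a ≠ b) : octSgn (idx a b - a) = - octSgn (b - a) := by
  rw [octSgn_cast, octSgn_cast, sgnZ_idx a b h, Int.cast_neg]

lemma sgn_rel {i j k : ZMod 7} (h1 : i ≠ j) (h2 : k ≠ i) (h3 : k ≠ j)
    (h4 : k ≠ idx i j) :
    octSgn (j - i) * octSgn (k - idx i j)
      = -(octSgn (k - i) * octSgn (j - idx i k)) := by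
  rw [octSgn_cast, octSgn_cast, octSgn_cast, octSgn_cast]
  exact_mod_cast congrArg (fun z : ℤ => (z : ℝ)) (sgnZ_rel i j k h1 h2 h3 h4)

end


/-- Lemma 2.2(a): if `ℓ = {i, j, i*j}` and `ℓ' = {i, k, i*k}` are
distinct Fano lines through `i`, then `E_i^{ℓ,k} = (1/2)(E_i^{ℓ',j} + F_i^{ℓ'})`
and `F_i^ℓ = (1/2)(3E_i^{ℓ',j} − F_i^{ℓ'})`, i.e.
`(E_i^{ℓ,k}, F_i^ℓ) = P·(E_i^{ℓ',j}, F_i^{ℓ'})` with `P = (1/2)[[1,1],[3,−1]]`. -/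
theorem stmt10 : ∀ i j k : ZMod 7, i ≠ j →
    k ∉ ({i, j, idx i j} : Set (ZMod 7)) →
    ∀ E₁ F₁ E₂ F₂ : Oct →ₗ[ℝ] Oct,
      isE i k (Qline i j) E₁ → isF i k (Qline i j) F₁ →
      isE i j (Qline i k) E₂ → isF i j (Qline i k) F₂ →
      E₁ = (1/2 : ℝ) • (E₂ + F₂) ∧ F₁ = (1/2 : ℝ) • ((3 : ℝ) • E₂ - F₂) := by
  intro i j k hij hk E₁ F₁ E₂ F₂ hE₁ hF₁ hE₂ hF₂
  simp only [Set.mem_insert_iff, Set.mem_singleton_iff, not_or] at hk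
  obtain ⟨hki, hkj, hkij⟩ := hk
  have hji := Ne.symm hij
  have hik := Ne.symm hki
  have hjk := Ne.symm hkj
  have hijk : idx i j ≠ k := Ne.symm hkij
  have hiij : i ≠ idx i j := Ne.symm (idx_ne_left i j hij)
  have hiik : i ≠ idx i k := Ne.symm (idx_ne_left i k hik)
  have hiji : idx i j ≠ i := idx_ne_left i j hij
  have hiki : idx i k ≠ i := idx_ne_left i k hik
  have hikj : idx i k ≠ j := idx_ik_ne_j i j k hij hki hkj hkij
  -- E₁ evaluations
  have hE11 : E₁ 1 = 0 := (hE₁ 1 (mem_Q1 i j)).1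
  have hE1i : E₁ (e i) = 0 := (hE₁ _ (mem_Qa i j)).1
  have hE1j : E₁ (e j) = 0 := (hE₁ _ (mem_Qb i j)).1
  have hE1ij : E₁ (e (idx i j)) = 0 := (hE₁ _ (mem_Qab i j)).1
  have hE1k : E₁ (e k) = (1/2 : ℝ) • (octSgn (k - i) • e (idx i k)) := by
    have h := (hE₁ 1 (mem_Q1 i j)).2
    rwa [oct_one_mul, oct_mul_one, e_mul_e hik] at h
  have hE1ik : E₁ (e (idx i k)) =
      octSgn (k - i) • ((1/2 : ℝ) • ((-1 : ℝ) • ((1 : Oct) * e k))) := by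
    have h := (hE₁ (e i) (mem_Qa i j)).2
    rw [e_mul_e hik, e_mul_self, oct_smul_mul] at h
    exact eval_from_smul (octSgn_sq _) h
  have hE1jk : E₁ (e (idx j k)) =
      octSgn (k - j) • ((1/2 : ℝ) • (octSgn (j - i) •
        (octSgn (k - idx i j) • e (idx (idx i j) k)))) := by
    have h := (hE₁ (e j) (mem_Qb i j)).2
    rw [e_mul_e hjk, e_mul_e hij, oct_smul_mul, e_mul_e hijk] at h
    exact eval_from_smul (octSgn_sq _) h
  have hE1m : E₁ (e (idx (idx i j) k)) =
      octSgn (k - idx i j) • ((1/2 : ℝ) • (octSgn (idx i j - i) •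
        (octSgn (k - j) • e (idx j k)))) := by
    have h := (hE₁ (e (idx i j)) (mem_Qab i j)).2
    rw [e_mul_e hijk, e_mul_e hiij, idx_inv i j hij, oct_smul_mul, e_mul_e hjk] at h
    exact eval_from_smul (octSgn_sq _) h
  -- F₁ evaluations
  have hF11 : F₁ 1 = 0 := by
    have h := (hF₁ 1 (mem_Q1 i j)).1
    rwa [oct_mul_one, oct_one_mul, sub_self, smul_zero] at h
  have hF1i : F₁ (e i) = 0 := by
    have h := (hF₁ (e i) (mem_Qa i j)).1
    rwa [sub_self, smul_zero] at h
  have hF1j : F₁ (e j) =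
      (1/2 : ℝ) • ((octSgn (j - i) - octSgn (i - j)) • e (idx i j)) := by
    have h := (hF₁ (e j) (mem_Qb i j)).1
    rwa [e_mul_e hij, e_mul_e hji, idx_symm i j hij, ← sub_smul] at h
  have hF1ij : F₁ (e (idx i j)) =
      (1/2 : ℝ) • ((octSgn (idx i j - i) - octSgn (i - idx i j)) • e j) := by
    have h := (hF₁ (e (idx i j)) (mem_Qab i j)).1
    rwa [e_mul_e hiij, idx_inv i j hij, e_mul_e hiji,
      idx_symm i (idx i j) hiij, idx_inv i j hij, ← sub_smul] at h
  have hF1k : F₁ (e k) = -((1/2 : ℝ) • (octSgn (k - i) • e (idx i k))) := by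
    have h := (hF₁ 1 (mem_Q1 i j)).2
    rwa [oct_one_mul, oct_one_mul, e_mul_e hik] at h
  have hF1ik : F₁ (e (idx i k)) =
      octSgn (k - i) • (-((1/2 : ℝ) • ((-1 : ℝ) • ((1 : Oct) * e k)))) := by
    have h := (hF₁ (e i) (mem_Qa i j)).2
    rw [e_mul_e hik, e_mul_self, oct_smul_mul] at h
    exact eval_from_smul (octSgn_sq _) h
  have hF1jk : F₁ (e (idx j k)) =
      octSgn (k - j) • (-((1/2 : ℝ) • (octSgn (i - j) •
        (octSgn (k - idx i j) • e (idx (idx i j) k))))) := by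
    have h := (hF₁ (e j) (mem_Qb i j)).2
    rw [e_mul_e hjk, e_mul_e hji, idx_symm i j hij, oct_smul_mul, e_mul_e hijk] at h
    exact eval_from_smul (octSgn_sq _) h
  have hF1m : F₁ (e (idx (idx i j) k)) =
      octSgn (k - idx i j) • (-((1/2 : ℝ) • (octSgn (i - idx i j) •
        (octSgn (k - j) • e (idx j k))))) := by
    have h := (hF₁ (e (idx i j)) (mem_Qab i j)).2
    rw [e_mul_e hijk, e_mul_e hiji, idx_symm i (idx i j) hiij, idx_inv i j hij,
      oct_smul_mul, e_mul_e hjk] at h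
    exact eval_from_smul (octSgn_sq _) h
  -- E₂ evaluations
  have hE21 : E₂ 1 = 0 := (hE₂ 1 (mem_Q1 i k)).1
  have hE2i : E₂ (e i) = 0 := (hE₂ _ (mem_Qa i k)).1
  have hE2k : E₂ (e k) = 0 := (hE₂ _ (mem_Qb i k)).1
  have hE2ik : E₂ (e (idx i k)) = 0 := (hE₂ _ (mem_Qab i k)).1
  have hE2j : E₂ (e j) = (1/2 : ℝ) • (octSgn (j - i) • e (idx i j)) := by
    have h := (hE₂ 1 (mem_Q1 i k)).2
    rwa [oct_one_mul, oct_mul_one, e_mul_e hij] at h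
  have hE2ij : E₂ (e (idx i j)) =
      octSgn (j - i) • ((1/2 : ℝ) • ((-1 : ℝ) • ((1 : Oct) * e j))) := by
    have h := (hE₂ (e i) (mem_Qa i k)).2
    rw [e_mul_e hij, e_mul_self, oct_smul_mul] at h
    exact eval_from_smul (octSgn_sq _) h
  have hE2jk : E₂ (e (idx j k)) =
      octSgn (j - k) • ((1/2 : ℝ) • (octSgn (k - i) •
        (octSgn (j - idx i k) • e (idx (idx i j) k)))) := by
    have h := (hE₂ (e k) (mem_Qb i k)).2
    rw [e_mul_e hkj, idx_symm j k hjk, e_mul_e hik, oct_smul_mul, e_mul_e hikj,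
      idx_assoc i j k hij hki hkj hkij] at h
    exact eval_from_smul (octSgn_sq _) h
  have hE2m : E₂ (e (idx (idx i j) k)) =
      octSgn (j - idx i k) • ((1/2 : ℝ) • (octSgn (idx i k - i) •
        (octSgn (j - k) • e (idx j k)))) := by
    have h := (hE₂ (e (idx i k)) (mem_Qab i k)).2
    rw [e_mul_e hikj, idx_assoc i j k hij hki hkj hkij, e_mul_e hiik,
      idx_inv i k hik, oct_smul_mul, e_mul_e hkj, idx_symm j k hjk] at h
    exact eval_from_smul (octSgn_sq _) h
  -- F₂ evaluations
  have hF21 : F₂ 1 = 0 := by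
    have h := (hF₂ 1 (mem_Q1 i k)).1
    rwa [oct_mul_one, oct_one_mul, sub_self, smul_zero] at h
  have hF2i : F₂ (e i) = 0 := by
    have h := (hF₂ (e i) (mem_Qa i k)).1
    rwa [sub_self, smul_zero] at h
  have hF2k : F₂ (e k) =
      (1/2 : ℝ) • ((octSgn (k - i) - octSgn (i - k)) • e (idx i k)) := by
    have h := (hF₂ (e k) (mem_Qb i k)).1
    rwa [e_mul_e hik, e_mul_e hki, idx_symm i k hik, ← sub_smul] at h
  have hF2ik : F₂ (e (idx i k)) =
      (1/2 : ℝ) • ((octSgn (idx i k - i) - octSgn (i - idx i k)) • e k) := by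
    have h := (hF₂ (e (idx i k)) (mem_Qab i k)).1
    rwa [e_mul_e hiik, idx_inv i k hik, e_mul_e hiki,
      idx_symm i (idx i k) hiik, idx_inv i k hik, ← sub_smul] at h
  have hF2j : F₂ (e j) = -((1/2 : ℝ) • (octSgn (j - i) • e (idx i j))) := by
    have h := (hF₂ 1 (mem_Q1 i k)).2
    rwa [oct_one_mul, oct_one_mul, e_mul_e hij] at h
  have hF2ij : F₂ (e (idx i j)) =
      octSgn (j - i) • (-((1/2 : ℝ) • ((-1 : ℝ) • ((1 : Oct) * e j)))) := by
    have h := (hF₂ (e i) (mem_Qa i k)).2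
    rw [e_mul_e hij, e_mul_self, oct_smul_mul] at h
    exact eval_from_smul (octSgn_sq _) h
  have hF2jk : F₂ (e (idx j k)) =
      octSgn (j - k) • (-((1/2 : ℝ) • (octSgn (i - k) •
        (octSgn (j - idx i k) • e (idx (idx i j) k))))) := by
    have h := (hF₂ (e k) (mem_Qb i k)).2
    rw [e_mul_e hkj, idx_symm j k hjk, e_mul_e hki, idx_symm i k hik,
      oct_smul_mul, e_mul_e hikj, idx_assoc i j k hij hki hkj hkij] at h
    exact eval_from_smul (octSgn_sq _) h
  have hF2m : F₂ (e (idx (idx i j) k)) =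
      octSgn (j - idx i k) • (-((1/2 : ℝ) • (octSgn (i - idx i k) •
        (octSgn (j - k) • e (idx j k))))) := by
    have h := (hF₂ (e (idx i k)) (mem_Qab i k)).2
    rw [e_mul_e hikj, idx_assoc i j k hij hki hkj hkij, e_mul_e hiki,
      idx_symm i (idx i k) hiik, idx_inv i k hik, oct_smul_mul, e_mul_e hkj,
      idx_symm j k hjk] at h
    exact eval_from_smul (octSgn_sq _) h
  -- sign relations
  have r1 : octSgn (i - j) = - octSgn (j - i) := sgn_neg hij
  have r2 : octSgn (i - k) = - octSgn (k - i) := sgn_neg hik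
  have r3 : octSgn (j - k) = - octSgn (k - j) := sgn_neg hjk
  have r4 : octSgn (idx i j - i) = - octSgn (j - i) := sgn_idx hij
  have r5 : octSgn (idx i k - i) = - octSgn (k - i) := sgn_idx hik
  have r6 : octSgn (i - idx i j) = octSgn (j - i) := by
    rw [sgn_neg hiij, sgn_idx hij, neg_neg]
  have r7 : octSgn (i - idx i k) = octSgn (k - i) := by
    rw [sgn_neg hiik, sgn_idx hik, neg_neg]
  have rel := sgn_rel hij hki hkj hkij
  constructor
  · apply oct_lm_ext
    · simp only [LinearMap.smul_apply, LinearMap.add_apply, hE11, hE21, hF21,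
        add_zero, smul_zero]
    · intro a
      rcases oct_cover i j k a hij hki hkj hkij with rfl|rfl|rfl|rfl|rfl|rfl|rfl <;>
        simp only [LinearMap.smul_apply, LinearMap.add_apply]
      · rw [hE1i, hE2i, hF2i]; simp
      · rw [hE1j, hE2j, hF2j]; module
      · rw [hE1ij, hE2ij, hF2ij]; module
      · rw [hE1k, hE2k, hF2k, r2]; module
      · rw [hE1ik, hE2ik, hF2ik, oct_one_mul, r5, r7]; module
      · rw [hE1jk, hE2jk, hF2jk, r3, r2]
        match_scalars
        linear_combination ((1/2 : ℝ) * octSgn (k - j)) * rel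
      · rw [hE1m, hE2m, hF2m, r4, r5, r7, r3]
        match_scalars
        linear_combination (-(1/2 : ℝ) * octSgn (k - j)) * rel
  · apply oct_lm_ext
    · simp only [LinearMap.smul_apply, LinearMap.sub_apply, hF11, hE21, hF21,
        smul_zero, sub_zero]
    · intro a
      rcases oct_cover i j k a hij hki hkj hkij with rfl|rfl|rfl|rfl|rfl|rfl|rfl <;>
        simp only [LinearMap.smul_apply, LinearMap.sub_apply]
      · rw [hF1i, hE2i, hF2i]; simp
      · rw [hF1j, hE2j, hF2j, r1]; module
      · rw [hF1ij, hE2ij, hF2ij, r4, r6, oct_one_mul]; module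
      · rw [hF1k, hE2k, hF2k, r2]; module
      · rw [hF1ik, hE2ik, hF2ik, oct_one_mul, r5, r7]; module
      · rw [hF1jk, hE2jk, hF2jk, r1, r3, r2]
        match_scalars
        linear_combination ((1/2 : ℝ) * octSgn (k - j)) * rel
      · rw [hF1m, hE2m, hF2m, r6, r5, r7, r3]
        match_scalars
        linear_combination (-(1/2 : ℝ) * octSgn (k - j)) * rel
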